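/- Let (α, 𝒜, μ) and (β, ℬ, ν) be σ-finite measure spaces, and let f : α × β → [0,∞) be measurable with ∫ f d(μ×ν) = 1; set f_X(x) := ∫ f(x,y) dν(y). Let A_1, …, A_K be a measurable partition of α, and for each i let g_i : β → (0,∞) be measurable with 0 < ∫ g_i dν < ∞ and f(x,y) ≤ f_X(x) · g_i(y) for all x ∈ A_i and all y ∈ β. Define h(x,y) := g_i(y) / ∫ g_i dν for x ∈ A_i. Then 0 ≤ ∫_{{(x,y) : f(x,y) > 0}} f(x,y) · log( f(x,y) / (f_X(x) · h(x,y)) ) d(μ×ν) ≤ log( ∑_{i=1}^K (∫_{A_i} f_X dμ) · (∫_β g_i dν) ). -/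

import Mathlib

open MeasureTheory

/-- Main chained inequality in the proof of Theorem 4 (weak posterior consistency): for a
joint density `f` with marginal `f_X`, a measurable partition `A_1, …, A_K` of the
predictor space, and positive integrable envelopes `g_i` dominating the conditional
density on each block, the KL divergence from the true conditional density to the
normalized piecewise-constant conditional density `h` is nonnegative and at most
`log(∑ i (∫_{A_i} f_X dμ)(∫ g_i dν))`. -/
theorem stmt14 {α β : Type*} [MeasurableSpace α] [MeasurableSpace β]
    (μ : Measure α) (ν : Measure β) [SigmaFinite μ] [SigmaFinite ν]
    (f : α × β → ℝ) (hf_meas : Measurable f) (hf_nonneg : ∀ p, 0 ≤ f p)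
    (hf_int : ∫ p, f p ∂(μ.prod ν) = 1)
    (fX : α → ℝ) (hfX : ∀ x, fX x = ∫ y, f (x, y) ∂ν)
    (K : ℕ) (A : Fin K → Set α) (hA_meas : ∀ i, MeasurableSet (A i))
    (hA_disj : Pairwise fun i j => Disjoint (A i) (A j))
    (hA_cover : (⋃ i, A i) = Set.univ)
    (g : Fin K → β → ℝ) (hg_meas : ∀ i, Measurable (g i)) (hg_pos : ∀ i y, 0 < g i y)
    (hg_intble : ∀ i, Integrable (g i) ν) (hg_int_pos : ∀ i, 0 < ∫ y, g i y ∂ν)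
    (hdom : ∀ i, ∀ x ∈ A i, ∀ y, f (x, y) ≤ fX x * g i y)
    (h : α × β → ℝ)
    (hh : ∀ p : α × β,
      h p = ∑ i, Set.indicator (A i) (fun _ => g i p.2 / ∫ y, g i y ∂ν) p.1) :
    0 ≤ ∫ p in {p : α × β | 0 < f p},
          f p * Real.log (f p / (fX p.1 * h p)) ∂(μ.prod ν) ∧
    ∫ p in {p : α × β | 0 < f p}, f p * Real.log (f p / (fX p.1 * h p)) ∂(μ.prod ν)
      ≤ Real.log (∑ i, (∫ x in A i, fX x ∂μ) * ∫ y, g i y ∂ν) := by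
  classical
  set S : Set (α × β) := {p : α × β | 0 < f p} with hS
  have hS_meas : MeasurableSet S := measurableSet_lt measurable_const hf_meas
  set c : Fin K → ℝ := fun i => ∫ y, g i y ∂ν with hc
  set w : Fin K → ℝ := fun i => ∫ x in A i, fX x ∂μ with hw
  have hf_intble : Integrable f (μ.prod ν) := by
    by_contra hcc
    rw [integral_undef hcc] at hf_int
    exact one_ne_zero hf_int.symm
  have hfXeq : fX = fun x => ∫ y, f (x, y) ∂ν := funext hfX
  have hfX_nonneg : ∀ x, 0 ≤ fX x := by
    intro x; rw [hfX x]; exact integral_nonneg fun y => hf_nonneg _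
  have hfX_intble : Integrable fX μ := by
    rw [hfXeq]; exact hf_intble.integral_prod_left
  have hx_mem : ∀ x : α, ∃ i, x ∈ A i := by
    intro x
    have : x ∈ ⋃ i, A i := by rw [hA_cover]; trivial
    exact Set.mem_iUnion.1 this
  have hmem_unique : ∀ {i : Fin K} {x : α}, x ∈ A i → ∀ j, j ≠ i → x ∉ A j := by
    intro i x hx j hj hxj
    exact (hA_disj hj).le_bot ⟨hxj, hx⟩
  have hcollapse : ∀ (r : Fin K → α → ℝ) (i : Fin K) (x : α), x ∈ A i →
      ∑ j, Set.indicator (A j) (r j) x = r i x := by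
    intro r i x hx
    rw [Finset.sum_eq_single i]
    · exact Set.indicator_of_mem hx _
    · intro j _ hj; exact Set.indicator_of_notMem (hmem_unique hx j hj) _
    · simp
  have hprod_mem : ∀ (i : Fin K) (p : α × β),
      p ∈ A i ×ˢ (Set.univ : Set β) ↔ p.1 ∈ A i := by
    intro i p; simp [Set.mem_prod]
  have hrest : ∀ i : Fin K,
      (μ.restrict (A i)).prod ν = (μ.prod ν).restrict ((A i) ×ˢ (Set.univ : Set β)) := by
    intro i
    rw [← Measure.prod_restrict, Measure.restrict_univ]
  -- sum of w is 1
  have hfX_int_eq : ∫ x, fX x ∂μ = 1 := by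
    rw [hfXeq, ← integral_prod f hf_intble]; exact hf_int
  have hsum1 : ∑ i, w i = 1 := by
    have hpt : ∀ x, ∑ i, Set.indicator (A i) fX x = fX x := by
      intro x
      obtain ⟨i, hi⟩ := hx_mem x
      exact hcollapse (fun _ => fX) i x hi
    calc ∑ i, w i = ∑ i, ∫ x, Set.indicator (A i) fX x ∂μ := by
          refine Finset.sum_congr rfl fun i _ => ?_
          rw [integral_indicator (hA_meas i)]
      _ = ∫ x, ∑ i, Set.indicator (A i) fX x ∂μ :=
          (integral_finset_sum _ fun i _ => hfX_intble.indicator (hA_meas i)).symm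
      _ = ∫ x, fX x ∂μ := by
          refine integral_congr_ae (ae_of_all _ fun x => hpt x)
      _ = 1 := hfX_int_eq
  have hw_nonneg : ∀ i, 0 ≤ w i := fun i =>
    setIntegral_nonneg (hA_meas i) fun x _ => hfX_nonneg x
  -- Q = fX * h : representation, integrability, total integral 1
  have hQ_repr : ∀ p : α × β, fX p.1 * h p =
      ∑ i, Set.indicator ((A i) ×ˢ (Set.univ : Set β))
        (fun q => fX q.1 * (g i q.2 / c i)) p := by
    intro p
    rw [hh, Finset.mul_sum]
    refine Finset.sum_congr rfl fun i _ => ?_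
    by_cases hp : p.1 ∈ A i
    · rw [Set.indicator_of_mem hp, Set.indicator_of_mem ((hprod_mem i p).2 hp)]
    · rw [Set.indicator_of_notMem hp,
        Set.indicator_of_notMem (fun hcp => hp ((hprod_mem i p).1 hcp)), mul_zero]
  have hterm_intble : ∀ i : Fin K,
      Integrable (Set.indicator ((A i) ×ˢ (Set.univ : Set β))
        (fun q : α × β => fX q.1 * (g i q.2 / c i))) (μ.prod ν) := by
    intro i
    have h1 : Integrable (fun q : α × β => fX q.1 * (g i q.2 / c i)) (μ.prod ν) :=
      hfX_intble.mul_prod ((hg_intble i).div_const (c i))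
    exact h1.indicator ((hA_meas i).prod MeasurableSet.univ)
  have hQ_intble : Integrable (fun p : α × β => fX p.1 * h p) (μ.prod ν) := by
    have hsum_intble : Integrable (fun p : α × β =>
        ∑ i, Set.indicator ((A i) ×ˢ (Set.univ : Set β))
          (fun q : α × β => fX q.1 * (g i q.2 / c i)) p) (μ.prod ν) :=
      integrable_finset_sum _ fun i _ => hterm_intble i
    exact hsum_intble.congr (ae_of_all _ fun p => (hQ_repr p).symm)
  have hterm_int : ∀ i : Fin K,
      ∫ p, Set.indicator ((A i) ×ˢ (Set.univ : Set β))
        (fun q : α × β => fX q.1 * (g i q.2 / c i)) p ∂(μ.prod ν) = w i := by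
    intro i
    rw [integral_indicator ((hA_meas i).prod MeasurableSet.univ), ← hrest i]
    have hFi : Integrable (fun q : α × β => fX q.1 * (g i q.2 / c i))
        ((μ.restrict (A i)).prod ν) :=
      hfX_intble.restrict.mul_prod ((hg_intble i).div_const (c i))
    rw [integral_prod _ hFi]
    have hinner : ∀ x, ∫ y, fX x * (g i y / c i) ∂ν = fX x := by
      intro x
      rw [integral_const_mul, integral_div, div_self (hg_int_pos i).ne', mul_one]
    simp_rw [hinner]
    rfl
  have hQ_int : ∫ p, fX p.1 * h p ∂(μ.prod ν) = 1 := by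
    rw [integral_congr_ae (ae_of_all _ hQ_repr),
      integral_finset_sum _ fun i _ => hterm_intble i]
    simp_rw [hterm_int]
    exact hsum1
  have hQ_nonneg : ∀ p : α × β, 0 ≤ fX p.1 * h p := by
    intro p
    rw [hQ_repr p]
    refine Finset.sum_nonneg fun i _ => Set.indicator_nonneg (fun q _ => ?_) p
    exact mul_nonneg (hfX_nonneg _) (div_nonneg (hg_pos i q.2).le (hg_int_pos i).le)
  -- key pointwise facts on S
  have hkey : ∀ p ∈ S, ∃ i, p.1 ∈ A i ∧ 0 < fX p.1 ∧ h p = g i p.2 / c i := by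
    intro p hp
    obtain ⟨i, hi⟩ := hx_mem p.1
    have hfp : 0 < f p := hp
    have hd : f p ≤ fX p.1 * g i p.2 := hdom i p.1 hi p.2
    have hgp := hg_pos i p.2
    have hfXp : 0 < fX p.1 := by nlinarith [hfX_nonneg p.1]
    refine ⟨i, hi, hfXp, ?_⟩
    rw [hh]
    exact hcollapse (fun j _ => g j p.2 / c j) i p.1 hi
  have hQpos : ∀ p ∈ S, 0 < fX p.1 * h p := by
    intro p hp
    obtain ⟨i, _, hfXp, hhp⟩ := hkey p hp
    rw [hhp]
    exact mul_pos hfXp (div_pos (hg_pos i p.2) (hg_int_pos i))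
  -- 1 ≤ ∑ w i * c i
  have hfX_le : ∀ i : Fin K, ∀ x ∈ A i, fX x ≤ fX x * c i := by
    intro i x hx
    by_cases hxi : Integrable (fun y => f (x, y)) ν
    · calc fX x = ∫ y, f (x, y) ∂ν := hfX x
        _ ≤ ∫ y, fX x * g i y ∂ν :=
            integral_mono hxi ((hg_intble i).const_mul _) (fun y => hdom i x hx y)
        _ = fX x * c i := integral_const_mul _ _
    · have h0 : fX x = 0 := by rw [hfX x, integral_undef hxi]
      rw [h0, zero_mul]
  have hone_le : (1 : ℝ) ≤ ∑ i, w i * c i := by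
    rw [← hsum1]
    refine Finset.sum_le_sum fun i _ => ?_
    calc w i = ∫ x in A i, fX x ∂μ := rfl
      _ ≤ ∫ x in A i, fX x * c i ∂μ :=
          setIntegral_mono_on hfX_intble.integrableOn
            (hfX_intble.mul_const _).integrableOn (hA_meas i) (hfX_le i)
      _ = w i * c i := integral_mul_const _ _
  by_cases hint : IntegrableOn (fun p => f p * Real.log (f p / (fX p.1 * h p))) S (μ.prod ν)
  · -- integrable case
    have hfS : ∫ p in S, f p ∂(μ.prod ν) = 1 := by
      rw [setIntegral_eq_integral_of_forall_compl_eq_zero]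
      · exact hf_int
      · intro p hp
        exact le_antisymm (not_lt.1 hp) (hf_nonneg p)
    -- lower bound
    have hlow : 0 ≤ ∫ p in S, f p * Real.log (f p / (fX p.1 * h p)) ∂(μ.prod ν) := by
      have hmono : ∀ p ∈ S, (fun q : α × β => -(f q * Real.log (f q / (fX q.1 * h q)))) p
          ≤ (fun q : α × β => fX q.1 * h q - f q) p := by
        intro p hp
        have hfp : 0 < f p := hp
        have hQP := hQpos p hp
        have hlog := Real.log_le_sub_one_of_pos (div_pos hQP hfp)
        have hln : Real.log ((fX p.1 * h p) / f p)
            = -Real.log (f p / (fX p.1 * h p)) := by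
          rw [← Real.log_inv, inv_div]
        rw [hln] at hlog
        have h2 : f p * -Real.log (f p / (fX p.1 * h p))
            ≤ f p * ((fX p.1 * h p) / f p - 1) :=
          mul_le_mul_of_nonneg_left hlog hfp.le
        have h3 : f p * ((fX p.1 * h p) / f p - 1) = fX p.1 * h p - f p := by
          field_simp
        have h4 : f p * -Real.log (f p / (fX p.1 * h p))
            = -(f p * Real.log (f p / (fX p.1 * h p))) := by ring
        show -(f p * Real.log (f p / (fX p.1 * h p))) ≤ fX p.1 * h p - f p
        linarith
      have hnegint : IntegrableOn
          (fun p : α × β => -(f p * Real.log (f p / (fX p.1 * h p)))) S (μ.prod ν) :=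
        hint.neg
      have hsubint : IntegrableOn
          (fun p : α × β => fX p.1 * h p - f p) S (μ.prod ν) :=
        (hQ_intble.sub hf_intble).integrableOn
      have hmo := setIntegral_mono_on hnegint hsubint hS_meas hmono
      rw [integral_neg] at hmo
      have h5 : ∫ p in S, (fX p.1 * h p - f p) ∂(μ.prod ν)
          = (∫ p in S, fX p.1 * h p ∂(μ.prod ν)) - ∫ p in S, f p ∂(μ.prod ν) :=
        integral_sub hQ_intble.integrableOn hf_intble.integrableOn
      have h6 : ∫ p in S, fX p.1 * h p ∂(μ.prod ν) ≤ 1 := by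
        rw [← hQ_int]
        exact setIntegral_le_integral hQ_intble (ae_of_all _ hQ_nonneg)
      rw [h5, hfS] at hmo
      linarith
    -- upper bound
    set Ψ : α × β → ℝ := fun p =>
      ∑ i, Set.indicator ((A i) ×ˢ (Set.univ : Set β)) f p * Real.log (c i) with hΨ
    have hΨ_intble : Integrable Ψ (μ.prod ν) :=
      integrable_finset_sum _ fun i _ =>
        (hf_intble.indicator ((hA_meas i).prod MeasurableSet.univ)).mul_const _
    have hΨ_zero : ∀ p, p ∉ S → Ψ p = 0 := by
      intro p hp
      have hfp : f p = 0 := le_antisymm (not_lt.1 hp) (hf_nonneg p)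
      simp only [hΨ]
      refine Finset.sum_eq_zero fun i _ => ?_
      rw [Set.indicator_apply]
      split <;> simp [hfp]
    have hmono2 : ∀ p ∈ S,
        (fun q : α × β => f q * Real.log (f q / (fX q.1 * h q))) p ≤ Ψ p := by
      intro p hp
      obtain ⟨i, hi, hfXp, hhp⟩ := hkey p hp
      have hfp : 0 < f p := hp
      have hgp := hg_pos i p.2
      have hcp := hg_int_pos i
      have harg : f p / (fX p.1 * h p) ≤ c i := by
        rw [hhp]
        have hpos : 0 < fX p.1 * (g i p.2 / c i) := by positivity
        rw [div_le_iff₀ hpos]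
        calc f p ≤ fX p.1 * g i p.2 := hdom i p.1 hi p.2
          _ = c i * (fX p.1 * (g i p.2 / c i)) := by
              field_simp
              exact (div_self hcp.ne').symm
      have hlog := Real.log_le_log (div_pos hfp (hQpos p hp)) harg
      have hΨp : Ψ p = f p * Real.log (c i) := by
        simp only [hΨ]
        rw [Finset.sum_eq_single i]
        · rw [Set.indicator_of_mem ((hprod_mem i p).2 hi)]
        · intro j _ hj
          rw [Set.indicator_of_notMem
            (fun hcp2 => (hmem_unique hi j hj) ((hprod_mem j p).1 hcp2)), zero_mul]
        · simp
      rw [hΨp]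
      exact mul_le_mul_of_nonneg_left hlog hfp.le
    have hup1 : ∫ p in S, f p * Real.log (f p / (fX p.1 * h p)) ∂(μ.prod ν)
        ≤ ∫ p in S, Ψ p ∂(μ.prod ν) :=
      setIntegral_mono_on hint hΨ_intble.integrableOn hS_meas hmono2
    have hfiber : ∀ i : Fin K,
        ∫ p in (A i) ×ˢ (Set.univ : Set β), f p ∂(μ.prod ν) = w i := by
      intro i
      rw [← hrest i]
      have hfi : Integrable f ((μ.restrict (A i)).prod ν) := by
        rw [hrest i]; exact hf_intble.integrableOn
      rw [integral_prod _ hfi]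
      simp_rw [← hfX]
      rfl
    have hup2 : ∫ p in S, Ψ p ∂(μ.prod ν) = ∑ i, w i * Real.log (c i) := by
      rw [setIntegral_eq_integral_of_forall_compl_eq_zero hΨ_zero]
      simp only [hΨ]
      rw [integral_finset_sum _ fun i _ =>
        (hf_intble.indicator ((hA_meas i).prod MeasurableSet.univ)).mul_const _]
      refine Finset.sum_congr rfl fun i _ => ?_
      rw [integral_mul_const, integral_indicator ((hA_meas i).prod MeasurableSet.univ),
        hfiber i]
    have hjensen : ∑ i, w i * Real.log (c i) ≤ Real.log (∑ i, w i * c i) := by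
      have hconc := strictConcaveOn_log_Ioi.concaveOn
      have hj := hconc.le_map_sum (fun i _ => hw_nonneg i) hsum1
        (fun i (_ : i ∈ Finset.univ) => hg_int_pos i)
      simpa [smul_eq_mul] using hj
    exact ⟨hlow, le_trans hup1 (le_trans (le_of_eq hup2) hjensen)⟩
  · -- not integrable: integral is zero
    rw [integral_undef hint]
    exact ⟨le_refl 0, Real.log_nonneg hone_le⟩
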